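/- Let 𝒞 be a Z2Z4-additive code and let 𝒮 be the additive subgroup of Z2^α × Z4^β generated by 𝒞 together with all elements 2(u*v) for u, v ∈ 𝒞. Then Φ(𝒮) = ⟨Φ(𝒞)⟩, the linear span of Φ(𝒞) in Z2^(α+2β); in particular, the linear span of a Z2Z4-linear code is again a Z2Z4-linear code. -/

import Mathlib

/-- The ambient group `Z2^α × Z4^β`, with componentwise ring structure
(so `u * v` is the componentwise product). -/
abbrev Amb (α β : ℕ) := (Fin α → ZMod 2) × (Fin β → ZMod 4)

/-- The binary space `Z2^α × (Z2²)^β ≅ Z2^(α+2β)`. -/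
abbrev Bin (α β : ℕ) := (Fin α → ZMod 2) × (Fin β → ZMod 2 × ZMod 2)

/-- The Gray map `φ : Z4 → Z2²` with `φ(0)=(0,0), φ(1)=(0,1), φ(2)=(1,1), φ(3)=(1,0)`. -/
def grayPair (y : ZMod 4) : ZMod 2 × ZMod 2 :=
  match y.val with
  | 0 => (0, 0)
  | 1 => (0, 1)
  | 2 => (1, 1)
  | _ => (1, 0)

/-- The extended Gray map `Φ : Z2^α × Z4^β → Z2^(α+2β)`. -/
def Phi {α β : ℕ} (u : Amb α β) : Bin α β :=
  (u.1, fun i => grayPair (u.2 i))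

/-- The kernel `K(C) = {x | x + C = C}` of a binary code. -/
def kernelK {α β : ℕ} (C : Set (Bin α β)) : Set (Bin α β) :=
  {x | (fun y => x + y) '' C = C}

/-- The rank of a binary code: the `Z2`-dimension of its linear span. -/
noncomputable def rankOf {α β : ℕ} (C : Set (Bin α β)) : ℕ :=
  Module.finrank (ZMod 2) (Submodule.span (ZMod 2) C)

/-- The dimension of the kernel of a binary code. -/
noncomputable def kerDim {α β : ℕ} (C : Set (Bin α β)) : ℕ :=
  Module.finrank (ZMod 2) (Submodule.span (ZMod 2) (kernelK C))

/-- A `Z2Z4`-additive code `C ⊆ Z2^α × Z4^β` is of type `(α,β;γ,δ;κ)`: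
`|C| = 2^(γ+2δ)`, the number of elements `x` with `2x = 0` is `2^(γ+δ)`, and `κ` is the
`Z2`-dimension of the projection onto the first `α` coordinates of `{x ∈ C | 2x = 0}`. -/
def IsTypeOf (α β γ δ κ : ℕ) (C : AddSubgroup (Amb α β)) : Prop :=
  Nat.card C = 2 ^ (γ + 2 * δ) ∧
  Nat.card {x : Amb α β | x ∈ C ∧ 2 • x = 0} = 2 ^ (γ + δ) ∧
  Module.finrank (ZMod 2)
    (Submodule.span (ZMod 2) (Prod.fst '' {x : Amb α β | x ∈ C ∧ 2 • x = 0})) = κ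

section aux
variable {α β : ℕ}

lemma gray_add' (a b : ZMod 4) :
    grayPair (a + b) = grayPair a + grayPair b + grayPair (a * b + a * b) := by revert a b; decide

lemma Phi_zero : Phi (0 : Amb α β) = 0 := by
  refine Prod.ext rfl ?_
  funext i
  show grayPair ((0 : Fin β → ZMod 4) i) = (0 : Fin β → ZMod 2 × ZMod 2) i
  simp only [Pi.zero_apply]
  decide

lemma Phi_add (u v : Amb α β) : Phi (u + v) = Phi u + Phi v + Phi (2 * (u * v)) := by
  rw [two_mul]
  refine Prod.ext ?_ ?_
  · funext i
    have h2 : ∀ a b : ZMod 2, a + b = a + b + (a * b + a * b) := by decide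
    show (u.1 + v.1) i = (u.1 + v.1 + (u * v + u * v).1) i
    simp only [Pi.add_apply, Prod.fst_add, Prod.fst_mul, Pi.mul_apply]
    exact h2 _ _
  · funext i
    show grayPair ((u.2 + v.2) i) =
      ((fun i => grayPair (u.2 i)) + (fun i => grayPair (v.2 i)) +
        fun i => grayPair ((u * v + u * v).2 i)) i
    simp only [Pi.add_apply, Prod.snd_add, Prod.snd_mul, Pi.mul_apply]
    exact gray_add' _ _

lemma four_mul_amb (w : Amb α β) : 2 * (2 * w) = 0 := by
  have h : w + w + (w + w) = 0 := by
    refine Prod.ext ?_ ?_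
    · funext i
      show w.1 i + w.1 i + (w.1 i + w.1 i) = 0
      have : ∀ a : ZMod 2, a + a + (a + a) = 0 := by decide
      exact this _
    · funext i
      show w.2 i + w.2 i + (w.2 i + w.2 i) = 0
      have : ∀ a : ZMod 4, a + a + (a + a) = 0 := by decide
      exact this _
  calc 2 * (2 * w) = w + w + (w + w) := by ring
    _ = 0 := h

lemma bin_add_self (x : Bin α β) : x + x = 0 := by
  refine Prod.ext ?_ ?_
  · funext i
    show x.1 i + x.1 i = 0
    have : ∀ a : ZMod 2, a + a = 0 := by decide
    exact this _
  · funext i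
    show x.2 i + x.2 i = 0
    have : ∀ a : ZMod 2 × ZMod 2, a + a = 0 := by decide
    exact this _

end aux

/-- the subgroup generated by `𝒞` and all `2(u*v)` maps under `Φ` onto the
linear span of `Φ(𝒞)`; in particular, the span of a `Z2Z4`-linear code is `Z2Z4`-linear. -/
theorem gray_image_of_span_subgroup (α β : ℕ) (C : AddSubgroup (Amb α β)) :
    Phi '' (AddSubgroup.closure
        ((C : Set (Amb α β)) ∪ {w | ∃ u ∈ C, ∃ v ∈ C, w = 2 * (u * v)}) : Set (Amb α β)) =
      (Submodule.span (ZMod 2) (Phi '' (C : Set (Amb α β))) : Set (Bin α β)) := by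
  classical
  set D : Set (Amb α β) := {w | ∃ u ∈ C, ∃ v ∈ C, w = 2 * (u * v)} with hDdef
  set S : AddSubgroup (Amb α β) := AddSubgroup.closure ((C : Set (Amb α β)) ∪ D) with hSdef
  set M : Submodule (ZMod 2) (Bin α β) :=
    Submodule.span (ZMod 2) (Phi '' (C : Set (Amb α β))) with hMdef
  have hCS : ∀ c ∈ C, c ∈ S := fun c hc =>
    AddSubgroup.subset_closure (Set.mem_union_left _ hc)
  have hDS : ∀ d ∈ D, d ∈ S := fun d hd =>
    AddSubgroup.subset_closure (Set.mem_union_right _ hd)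
  have hS : S = C ⊔ AddSubgroup.closure D := by
    rw [hSdef, AddSubgroup.closure_union, AddSubgroup.closure_eq]
  -- generators of D are in M and 2-torsion
  have hPhiD : ∀ w ∈ D, 2 * w = 0 ∧ Phi w ∈ M := by
    rintro w ⟨u, hu, v, hv, rfl⟩
    refine ⟨four_mul_amb _, ?_⟩
    have h1 : Phi (2 * (u * v)) = Phi (u + v) - Phi u - Phi v := by
      rw [Phi_add u v]; abel
    rw [h1]
    have hm : ∀ c ∈ C, Phi c ∈ M := fun c hc =>
      Submodule.subset_span (Set.mem_image_of_mem _ hc)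
    exact Submodule.sub_mem _ (Submodule.sub_mem _ (hm _ (add_mem hu hv)) (hm _ hu)) (hm _ hv)
  -- elements of closure D are 2-torsion and mapped into M
  have hQ : ∀ d ∈ AddSubgroup.closure D, 2 * d = 0 ∧ Phi d ∈ M := by
    intro d hd
    induction hd using AddSubgroup.closure_induction with
    | mem x hx => exact hPhiD x hx
    | zero => exact ⟨by rw [mul_zero], by rw [Phi_zero]; exact Submodule.zero_mem _⟩
    | add x y hx hy ihx ihy =>
      refine ⟨by rw [mul_add, ihx.1, ihy.1, add_zero], ?_⟩
      have hz : 2 * (x * y) = 0 := by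
        have : 2 * (x * y) = (2 * x) * y := by ring
        rw [this, ihx.1, zero_mul]
      rw [Phi_add x y, hz, Phi_zero, add_zero]
      exact Submodule.add_mem _ ihx.2 ihy.2
    | neg x hx ihx =>
      have hxx : -x = x := by
        have : x + x = 0 := by rw [← two_mul, ihx.1]
        exact neg_eq_of_add_eq_zero_left this
      rw [hxx]; exact ihx
  -- decomposition of elements of S
  have hdec : ∀ s ∈ S, ∃ c ∈ C, ∃ d, (2 * d = 0 ∧ Phi d ∈ M) ∧ s = c + d := by
    intro s hs
    rw [hS] at hs
    obtain ⟨c, hc, d, hd, hcd⟩ := AddSubgroup.mem_sup.mp hs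
    exact ⟨c, hc, d, hQ d hd, hcd.symm⟩
  -- S is closed under s t ↦ 2*(s*t)
  have hclosed : ∀ s ∈ S, ∀ t ∈ S, 2 * (s * t) ∈ S := by
    intro s hs t ht
    obtain ⟨c, hc, d, ⟨hd0, -⟩, rfl⟩ := hdec s hs
    obtain ⟨c', hc', d', ⟨hd'0, -⟩, rfl⟩ := hdec t ht
    have : 2 * ((c + d) * (c' + d')) =
        2 * (c * c') + (c * (2 * d') + (c' * (2 * d) + d * (2 * d'))) := by ring
    rw [this, hd0, hd'0, mul_zero, mul_zero, mul_zero, add_zero, add_zero, add_zero]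
    exact hDS _ ⟨c, hc, c', hc', rfl⟩
  -- Phi '' S is a submodule
  have hadd : ∀ x ∈ Phi '' (S : Set (Amb α β)), ∀ y ∈ Phi '' (S : Set (Amb α β)),
      x + y ∈ Phi '' (S : Set (Amb α β)) := by
    rintro _ ⟨s, hs, rfl⟩ _ ⟨t, ht, rfl⟩
    refine ⟨s + t + 2 * (s * t), add_mem (add_mem hs ht) (hclosed s hs t ht), ?_⟩
    have hz : 2 * ((s + t) * (2 * (s * t))) = 0 := by
      have : 2 * ((s + t) * (2 * (s * t))) = (s + t) * (s * t) * (2 * (2 * 1)) := by ring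
      rw [this, four_mul_amb (1 : Amb α β), mul_zero]
    rw [Phi_add (s + t) (2 * (s * t)), hz, Phi_zero, add_zero, Phi_add s t]
    have := bin_add_self (Phi (2 * (s * t)))
    calc Phi s + Phi t + Phi (2 * (s * t)) + Phi (2 * (s * t))
        = Phi s + Phi t + (Phi (2 * (s * t)) + Phi (2 * (s * t))) := by abel
      _ = Phi s + Phi t := by rw [this, add_zero]
  let N : Submodule (ZMod 2) (Bin α β) :=
    { carrier := Phi '' (S : Set (Amb α β))
      add_mem' := fun hx hy => hadd _ hx _ hy
      zero_mem' := ⟨0, S.zero_mem, Phi_zero⟩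
      smul_mem' := by
        intro c x hx
        have h01 : ∀ a : ZMod 2, a = 0 ∨ a = 1 := by decide
        rcases h01 c with rfl | rfl
        · rw [zero_smul]; exact ⟨0, S.zero_mem, Phi_zero⟩
        · rw [one_smul]; exact hx }
  apply Set.Subset.antisymm
  · rintro _ ⟨s, hs, rfl⟩
    obtain ⟨c, hc, d, ⟨hd0, hdM⟩, rfl⟩ := hdec s hs
    have hz : 2 * (c * d) = 0 := by
      have : 2 * (c * d) = c * (2 * d) := by ring
      rw [this, hd0, mul_zero]
    rw [Phi_add c d, hz, Phi_zero, add_zero]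
    exact Submodule.add_mem _ (Submodule.subset_span (Set.mem_image_of_mem _ hc)) hdM
  · have hle : M ≤ N := Submodule.span_le.mpr
      (fun x ⟨c, hc, hxc⟩ => ⟨c, hCS c hc, hxc⟩)
    exact fun x hx => hle hx
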